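/- Let U_0, ..., U_{d-1} be unitary d×d matrices such that the set {U_j U_k† : j ≠ k} is linearly independent over ℂ. Suppose V is a unitary d×d matrix with entries V_{ij} such that for every i, the matrix W_i = ∑_j V_{ij} U_j is unitary. Then every row of V has exactly one nonzero entry; that is, there exist a permutation σ of {0,...,d-1} and phases e^{iφ_i} such that V_{ij} = e^{iφ_i} δ_{j,σ(i)}. -/

import Mathlib

open Matrix
open scoped ComplexOrder

/-- If the set `{Uⱼ Uₖᴴ : j ≠ k}` is linearly independent and `V` is a unitary matrix
such that every `Wᵢ = ∑ⱼ V_{ij} Uⱼ` is unitary, then `V` is a phased permutation matrix: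
`V_{ij} = e^{iφᵢ} δ_{j, σ(i)}` for some permutation `σ` and real phases `φᵢ`. -/
theorem stmt_14 (d : ℕ)
    (U : Fin d → Matrix (Fin d) (Fin d) ℂ)
    (hU : ∀ j, U j ∈ Matrix.unitaryGroup (Fin d) ℂ)
    (hind : LinearIndependent ℂ
      (fun p : {p : Fin d × Fin d // p.1 ≠ p.2} => U p.1.1 * (U p.1.2)ᴴ))
    (V : Matrix (Fin d) (Fin d) ℂ)
    (hV : V ∈ Matrix.unitaryGroup (Fin d) ℂ)
    (hW : ∀ i, (∑ j, V i j • U j) ∈ Matrix.unitaryGroup (Fin d) ℂ) :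
    ∃ (σ : Equiv.Perm (Fin d)) (φ : Fin d → ℝ), ∀ i j,
      V i j = if j = σ i then Complex.exp ((φ i : ℂ) * Complex.I) else 0 := by
  classical
  have split : ∀ (f : Fin d → Fin d → Matrix (Fin d) (Fin d) ℂ),
      ∑ j, ∑ k, f j k = (∑ j, f j j) + ∑ p : {p : Fin d × Fin d // p.1 ≠ p.2}, f p.1.1 p.1.2 := by
    intro f
    have h1 : ∑ j, ∑ k, f j k = ∑ p : Fin d × Fin d, f p.1 p.2 :=
      (Fintype.sum_prod_type (fun p : Fin d × Fin d => f p.1 p.2)).symm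
    rw [h1,
      ← Finset.sum_filter_add_sum_filter_not Finset.univ (fun p : Fin d × Fin d => p.1 = p.2)]
    congr 1
    · rw [Finset.sum_filter, Fintype.sum_prod_type]
      simp
    · rw [← Finset.sum_subtype (Finset.univ.filter (fun p : Fin d × Fin d => ¬ p.1 = p.2))
        (by simp) (fun p : Fin d × Fin d => f p.1 p.2)]
  have hVmul : V * Vᴴ = 1 := (Matrix.mem_unitaryGroup_iff.mp hV)
  have hrow : ∀ i i', ∑ j, V i j * star (V i' j) = (1 : Matrix (Fin d) (Fin d) ℂ) i i' := by
    intro i i'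
    rw [← hVmul]
    simp [Matrix.mul_apply, Matrix.conjTranspose_apply]
  -- key: products of distinct entries in a row vanish
  have key : ∀ i j k, j ≠ k → V i j * star (V i k) = 0 := by
    intro i j k hjk
    have hW1 : (∑ j, V i j • U j) * (∑ j, V i j • U j)ᴴ = 1 :=
      Matrix.mem_unitaryGroup_iff.mp (hW i)
    have expand : (∑ j, V i j • U j) * (∑ j, V i j • U j)ᴴ
        = ∑ j, ∑ k, (V i j * star (V i k)) • (U j * (U k)ᴴ) := by
      rw [Matrix.conjTranspose_sum, Finset.sum_mul_sum]
      refine Finset.sum_congr rfl fun j _ => Finset.sum_congr rfl fun k _ => ?_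
      rw [Matrix.conjTranspose_smul, Matrix.smul_mul, Matrix.mul_smul, smul_smul]
    have hdiag : ∑ j, (V i j * star (V i j)) • (U j * (U j)ᴴ) = 1 := by
      have : ∀ j, (V i j * star (V i j)) • (U j * (U j)ᴴ)
          = (V i j * star (V i j)) • (1 : Matrix (Fin d) (Fin d) ℂ) := by
        intro j
        have h := Matrix.mem_unitaryGroup_iff.mp (hU j)
        rw [Matrix.star_eq_conjTranspose] at h
        rw [h]
      rw [Finset.sum_congr rfl fun j _ => this j, ← Finset.sum_smul, hrow i i]
      simp
    have hoff : ∑ p : {p : Fin d × Fin d // p.1 ≠ p.2},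
        (V i p.1.1 * star (V i p.1.2)) • (U p.1.1 * (U p.1.2)ᴴ) = 0 := by
      have := hW1
      rw [expand, split, hdiag] at this
      exact by linear_combination (norm := abel) this
    have := Fintype.linearIndependent_iff.mp hind
      (fun p => V i p.1.1 * star (V i p.1.2)) hoff ⟨(j, k), hjk⟩
    simpa using this
  -- each row has a nonzero entry
  have hex : ∀ i, ∃ j, V i j ≠ 0 := by
    intro i
    by_contra h
    push_neg at h
    have := hrow i i
    simp [h] at this
  choose σ₀ hσ₀ using hex
  have hzero : ∀ i k, k ≠ σ₀ i → V i k = 0 := by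
    intro i k hk
    have := key i (σ₀ i) k (Ne.symm hk)
    rcases mul_eq_zero.mp this with h | h
    · exact absurd h (hσ₀ i)
    · simpa using h
  have hinj : Function.Injective σ₀ := by
    intro i i' hii
    by_contra hne
    have h0 : ∑ j, V i j * star (V i' j) = 0 := by
      rw [hrow i i']
      simp [Matrix.one_apply, hne]
    have hsum : ∑ j, V i j * star (V i' j) = V i (σ₀ i) * star (V i' (σ₀ i)) := by
      rw [Finset.sum_eq_single (σ₀ i)]
      · intro b _ hb
        rw [hzero i b hb, zero_mul]
      · simp
    rw [hsum] at h0
    rcases mul_eq_zero.mp h0 with h | h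
    · exact hσ₀ i h
    · rw [hii] at h
      exact hσ₀ i' (by simpa using h)
  let σ : Equiv.Perm (Fin d) := Equiv.ofBijective σ₀ (Finite.injective_iff_bijective.mp hinj)
  have habs : ∀ i, ‖V i (σ₀ i)‖ = 1 := by
    intro i
    have h1 : ∑ j, V i j * star (V i j) = 1 := by
      rw [hrow i i]; simp
    have hsum : ∑ j, V i j * star (V i j) = V i (σ₀ i) * star (V i (σ₀ i)) := by
      rw [Finset.sum_eq_single (σ₀ i)]
      · intro b _ hb
        rw [hzero i b hb, zero_mul]
      · simp
    rw [hsum] at h1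
    have : (Complex.normSq (V i (σ₀ i)) : ℂ) = 1 := by
      rw [← Complex.mul_conj]; exact h1
    have h2 : Complex.normSq (V i (σ₀ i)) = 1 := by exact_mod_cast this
    have := Complex.sq_norm (V i (σ₀ i))
    nlinarith [norm_nonneg (V i (σ₀ i))]
  refine ⟨σ, fun i => (V i (σ₀ i)).arg, fun i j => ?_⟩
  by_cases hj : j = σ i
  · simp only [hj, if_pos rfl]
    have : (σ i : Fin d) = σ₀ i := rfl
    rw [this]
    have := Complex.norm_mul_exp_arg_mul_I (V i (σ₀ i))
    rw [habs i] at this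
    simpa using this.symm
  · rw [if_neg hj]
    exact hzero i j (by simpa [σ, Equiv.ofBijective] using hj)
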